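/- arXiv:2204.02332 — 4 statements merged into one kernel-verified Lean document; each statement's English description precedes it below -/
import Mathlib

section
/- Let n ≥ 1, let τ = (τ₁,…,τₙ) ∈ [0,∞)ⁿ, and let X = (X₁,…,Xₙ) be a vector of independent standard Gaussian random variables. Then for every Borel (Lebesgue-measurable) set A ⊆ ℝⁿ: √( P(X+τ ∈ A) · P(X−τ ∈ A) ) ≥ e^{−‖τ‖₂²/2} · P(X ∈ A), where ‖τ‖₂ is the Euclidean norm of τ. -/
open MeasureTheory ProbabilityTheory Real
open scoped ENNReal NNReal

/-- Fubini for lintegrals of products over a finite product of measures. -/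
lemma lintegral_pi_prod' {n : ℕ} (μ : Fin n → Measure ℝ) [∀ i, SigmaFinite (μ i)]
    (f : Fin n → ℝ → ℝ≥0∞) (hf : ∀ i, Measurable (f i)) :
    ∫⁻ x, ∏ i, f i (x i) ∂Measure.pi μ = ∏ i, ∫⁻ x, f i x ∂μ i := by
  induction n with
  | zero => simp
  | succ n ih =>
    have h := (measurePreserving_piFinSuccAbove (fun i => μ i) 0).symm
    have hFmeas : Measurable fun x : Fin (n+1) → ℝ => ∏ i, f i (x i) :=
      Finset.measurable_prod _ fun i _ => (hf i).comp (measurable_pi_apply i)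
    rw [← h.lintegral_comp hFmeas]
    simp_rw [MeasurableEquiv.piFinSuccAbove_symm_apply, Fin.insertNthEquiv,
      Fin.prod_univ_succ, Fin.insertNth_zero, Equiv.coe_fn_mk, Fin.cons_zero, Fin.cons_succ]
    simp only [Fin.zero_succAbove, cast_eq]
    rw [lintegral_prod_mul (f := f 0)
      (g := fun y : Fin n → ℝ => ∏ i : Fin n, f i.succ (y i)) (hf 0).aemeasurable
      (Finset.measurable_prod _ fun i _ =>
        ((hf i.succ).comp (measurable_pi_apply i))).aemeasurable]
    rw [ih (fun i => μ (Fin.succ i)) (fun i => f (Fin.succ i))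
      (fun i => hf (Fin.succ i))]

/-- One-dimensional Cameron–Martin: density of `gaussianReal m 1` w.r.t. `gaussianReal 0 1`. -/
lemma gaussianReal_shift_density (m : ℝ) :
    gaussianReal m 1 = (gaussianReal 0 1).withDensity
      (fun y => ENNReal.ofReal (Real.exp (m * y - m ^ 2 / 2))) := by
  rw [gaussianReal_of_var_ne_zero _ one_ne_zero, gaussianReal_of_var_ne_zero _ one_ne_zero,
    ← withDensity_mul _ (measurable_gaussianPDF 0 1)
      (Measurable.ennreal_ofReal (by fun_prop))]
  congr 1
  funext y
  simp only [Pi.mul_apply, gaussianPDF, ← ENNReal.ofReal_mul (gaussianPDFReal_nonneg 0 1 y)]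
  congr 1
  simp only [gaussianPDFReal, NNReal.coe_one, mul_one, sub_zero, mul_assoc, ← Real.exp_add]
  congr 1
  ring

lemma pi_gaussian_shift_eq {n : ℕ} (t : Fin n → ℝ) :
    (Measure.pi fun i : Fin n => gaussianReal (t i) 1)
      = (Measure.pi fun _ : Fin n => gaussianReal 0 1).withDensity
        (fun x => ∏ i, ENNReal.ofReal (Real.exp (t i * x i - t i ^ 2 / 2))) := by
  refine (Measure.pi_eq fun s hs => ?_)
  set f : Fin n → ℝ → ℝ≥0∞ := fun i y => ENNReal.ofReal (Real.exp (t i * y - t i ^ 2 / 2))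
  have hf : ∀ i, Measurable (f i) := fun i => Measurable.ennreal_ofReal (by fun_prop)
  rw [withDensity_apply _ (MeasurableSet.univ_pi hs),
    ← lintegral_indicator (MeasurableSet.univ_pi hs)]
  have hind : ∀ x : Fin n → ℝ,
      (Set.univ.pi s).indicator (fun x => ∏ i, f i (x i)) x
        = ∏ i, (s i).indicator (f i) (x i) := by
    intro x
    by_cases hx : x ∈ Set.univ.pi s
    · rw [Set.indicator_of_mem hx]
      exact Finset.prod_congr rfl fun i _ =>
        (Set.indicator_of_mem (hx i (Set.mem_univ i)) _).symm
    · rw [Set.indicator_of_notMem hx]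
      obtain ⟨i, hi⟩ : ∃ i, x i ∉ s i := by simpa [Set.mem_pi] using hx
      exact (Finset.prod_eq_zero (Finset.mem_univ i)
        (by rw [Set.indicator_of_notMem hi])).symm
  refine (lintegral_congr fun x => hind x).trans ?_
  rw [lintegral_pi_prod' _ _ (fun i => (hf i).indicator (hs i))]
  refine Finset.prod_congr rfl fun i _ => ?_
  rw [lintegral_indicator (hs i), gaussianReal_shift_density (t i),
    withDensity_apply _ (hs i)]

lemma measure_shift_eq {n : ℕ} (t : Fin n → ℝ) {A : Set (Fin n → ℝ)} (hA : MeasurableSet A) :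
    (Measure.pi fun _ : Fin n => gaussianReal 0 1) {x | x + t ∈ A}
      = ∫⁻ x in A, ENNReal.ofReal (Real.exp ((∑ i, t i * x i) - (∑ i, t i ^ 2) / 2))
          ∂(Measure.pi fun _ : Fin n => gaussianReal 0 1) := by
  set μ := Measure.pi fun _ : Fin n => gaussianReal 0 1 with hμ
  have hmp : MeasurePreserving (fun x : Fin n → ℝ => x + t) μ
      (Measure.pi fun i => gaussianReal (t i) 1) :=
    measurePreserving_pi (fun _ : Fin n => gaussianReal 0 1)
      (fun i => gaussianReal (t i) 1) (f := fun i y => y + t i)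
      (fun i => ⟨measurable_add_const _, by
        rw [gaussianReal_map_add_const (t i), zero_add]⟩)
  have h1 : μ {x | x + t ∈ A} = (Measure.pi fun i => gaussianReal (t i) 1) A := by
    rw [← hmp.map_eq, Measure.map_apply hmp.measurable hA]
    rfl
  rw [h1, pi_gaussian_shift_eq t, withDensity_apply _ hA]
  refine lintegral_congr fun x => ?_
  rw [← ENNReal.ofReal_prod_of_nonneg (fun i _ => (Real.exp_pos _).le), ← Real.exp_sum]
  congr 2
  rw [Finset.sum_sub_distrib, Finset.sum_div]

/-- Gaussian shift inequality (Claim 2.16 of the paper): for a standard Gaussian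
vector `X` and `τ` with nonnegative coordinates,
`√(P(X+τ ∈ A) P(X−τ ∈ A)) ≥ e^{−‖τ‖²/2} P(X ∈ A)`. -/
theorem gaussian_shift (n : ℕ) (hn : 1 ≤ n) (τ : Fin n → ℝ) (hτ : ∀ i, 0 ≤ τ i)
    (A : Set (Fin n → ℝ)) (hA : MeasurableSet A) :
    Real.exp (-(∑ i, τ i ^ 2) / 2) *
        ((Measure.pi fun _ : Fin n => gaussianReal 0 1) A).toReal ≤
      Real.sqrt
        (((Measure.pi fun _ : Fin n => gaussianReal 0 1) {x | x + τ ∈ A}).toReal *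
          ((Measure.pi fun _ : Fin n => gaussianReal 0 1) {x | x - τ ∈ A}).toReal) := by
  set μ := Measure.pi fun _ : Fin n => gaussianReal 0 1 with hμ
  set c := ∑ i, τ i ^ 2 with hc
  set h : (Fin n → ℝ) → ℝ := fun x => ∑ i, τ i * x i with hh
  have hhm : Measurable h := by
    apply Finset.measurable_sum
    intro i _
    exact measurable_const.mul (measurable_pi_apply i)
  have hplus : μ {x | x + τ ∈ A}
      = ∫⁻ x in A, ENNReal.ofReal (Real.exp (h x - c / 2)) ∂μ := measure_shift_eq τ hA
  have hminus : μ {x | x - τ ∈ A}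
      = ∫⁻ x in A, ENNReal.ofReal (Real.exp (-h x - c / 2)) ∂μ := by
    have hset : {x : Fin n → ℝ | x - τ ∈ A} = {x | x + (-τ) ∈ A} := by
      ext x; simp [sub_eq_add_neg]
    have e1 : ∀ x : Fin n → ℝ, (∑ i, (-τ) i * x i) = -h x := by
      intro x; simp [hh, ← Finset.sum_neg_distrib]
    have e2 : (∑ i, (-τ) i ^ 2) = c := by simp [hc]
    rw [hset, measure_shift_eq (-τ) hA]
    refine lintegral_congr fun x => ?_
    rw [e1, e2]
  -- Cauchy–Schwarz
  set f : (Fin n → ℝ) → ℝ≥0∞ := fun x => ENNReal.ofReal (Real.exp (h x / 2 - c / 4)) with hf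
  set g : (Fin n → ℝ) → ℝ≥0∞ := fun x => ENNReal.ofReal (Real.exp (-h x / 2 - c / 4)) with hg
  have hfm : Measurable f := (hhm.div_const 2).sub_const _ |>.exp.ennreal_ofReal
  have hgm : Measurable g := (hhm.neg.div_const 2).sub_const _ |>.exp.ennreal_ofReal
  have hconj : Real.HolderConjugate 2 2 := ⟨by norm_num, by norm_num, by norm_num⟩
  have hCS := ENNReal.lintegral_mul_le_Lp_mul_Lq (μ.restrict A) hconj
    hfm.aemeasurable hgm.aemeasurable
  have hfg : ∀ a, (f * g) a = ENNReal.ofReal (Real.exp (-c / 2)) := by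
    intro a
    rw [Pi.mul_apply, hf, hg, ← ENNReal.ofReal_mul (Real.exp_nonneg _), ← Real.exp_add]
    congr 2
    ring
  have hf2 : ∀ a, f a ^ (2 : ℝ) = ENNReal.ofReal (Real.exp (h a - c / 2)) := by
    intro a
    rw [hf, ENNReal.ofReal_rpow_of_pos (Real.exp_pos _), ← Real.exp_mul]
    congr 2
    ring
  have hg2 : ∀ a, g a ^ (2 : ℝ) = ENNReal.ofReal (Real.exp (-h a - c / 2)) := by
    intro a
    rw [hg, ENNReal.ofReal_rpow_of_pos (Real.exp_pos _), ← Real.exp_mul]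
    congr 2
    ring
  simp only [hfg, hf2, hg2] at hCS
  rw [lintegral_const, Measure.restrict_apply_univ] at hCS
  have key : ENNReal.ofReal (Real.exp (-c / 2)) * μ A
      ≤ (μ {x | x + τ ∈ A}) ^ (1 / 2 : ℝ) * (μ {x | x - τ ∈ A}) ^ (1 / 2 : ℝ) := by
    rw [hplus, hminus]
    exact hCS
  have hp_ne : (μ {x | x + τ ∈ A}) ≠ ⊤ := measure_ne_top _ _
  have hm_ne : (μ {x | x - τ ∈ A}) ≠ ⊤ := measure_ne_top _ _
  have hrhs_ne : (μ {x | x + τ ∈ A}) ^ (1 / 2 : ℝ) * (μ {x | x - τ ∈ A}) ^ (1 / 2 : ℝ) ≠ ⊤ :=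
    ENNReal.mul_ne_top (ENNReal.rpow_ne_top_of_nonneg (by norm_num) hp_ne)
      (ENNReal.rpow_ne_top_of_nonneg (by norm_num) hm_ne)
  calc Real.exp (-c / 2) * (μ A).toReal
      = (ENNReal.ofReal (Real.exp (-c / 2)) * μ A).toReal := by
        rw [ENNReal.toReal_mul, ENNReal.toReal_ofReal (Real.exp_nonneg _)]
    _ ≤ ((μ {x | x + τ ∈ A}) ^ (1 / 2 : ℝ) * (μ {x | x - τ ∈ A}) ^ (1 / 2 : ℝ)).toReal :=
        ENNReal.toReal_mono hrhs_ne key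
    _ = Real.sqrt ((μ {x | x + τ ∈ A}).toReal * (μ {x | x - τ ∈ A}).toReal) := by
        rw [ENNReal.toReal_mul, ← ENNReal.toReal_rpow, ← ENNReal.toReal_rpow,
          ← Real.mul_rpow ENNReal.toReal_nonneg ENNReal.toReal_nonneg,
          Real.sqrt_eq_rpow]
end

section
/- Let ν be an absolutely continuous probability measure on ℝ, let S_ν := {w ∈ ℝ : ν((−∞,v]) < ν((−∞,w]) for all v < w}, and let h : ℝ → S_ν be the increasing bijection determined by ν_Gauss((−∞,x]) = ν((−∞,h(x)]) for all x ∈ ℝ, where ν_Gauss is the standard Gaussian measure on ℝ (h(x) is the unique such element of S_ν, which exists since ν is atomless). For δ > 0 define A_δ := { x ∈ ℝ : (h(y) − h(x))/(y − x) ≥ δ for all y ∈ [x−1, x+1] \ {x} }. Then lim_{δ ↓ 0} ν_Gauss(A_δ) = 1. -/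
open MeasureTheory ProbabilityTheory Filter
open scoped ENNReal NNReal

lemma slope_aux_strictMono (ν : Measure ℝ) (h : ℝ → ℝ)
    (hpush : ∀ x : ℝ, gaussianReal 0 1 (Set.Iic x) = ν (Set.Iic (h x))) :
    StrictMono h := by
  intro x y hxy
  by_contra hle
  push_neg at hle
  have h2 : gaussianReal 0 1 (Set.Ioc x y) ≠ 0 := by
    intro h0
    have := gaussianReal_absolutelyContinuous' 0 one_ne_zero h0
    rw [Real.volume_Ioc, ENNReal.ofReal_eq_zero] at this
    linarith
  have h1 : gaussianReal 0 1 (Set.Iic x) < gaussianReal 0 1 (Set.Iic y) := by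
    rw [← Set.Iic_union_Ioc_eq_Iic hxy.le,
      measure_union (Set.Iic_disjoint_Ioc le_rfl) measurableSet_Ioc]
    exact ENNReal.lt_add_right (measure_ne_top _ _) h2
  rw [hpush, hpush] at h1
  exact absurd (measure_mono (Set.Iic_subset_Iic.2 hle)) (not_le.2 h1)

lemma slope_aux_map (ν : Measure ℝ) [IsProbabilityMeasure ν] (h : ℝ → ℝ)
    (hmono : StrictMono h)
    (hpush : ∀ x : ℝ, gaussianReal 0 1 (Set.Iic x) = ν (Set.Iic (h x))) :
    Measure.map h (gaussianReal 0 1) = ν := by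
  have hmeas : Measurable h := hmono.monotone.measurable
  refine MeasureTheory.Measure.ext_of_Iic _ _ fun a => ?_
  rw [Measure.map_apply hmeas measurableSet_Iic]
  set γ := gaussianReal 0 1 with hγ
  set S := h ⁻¹' Set.Iic a with hSdef
  rcases Set.eq_empty_or_nonempty S with hemp | hne
  · rw [hemp, measure_empty]
    have key : ∀ n : ℕ, ν (Set.Iic a) ≤ γ (Set.Iic (-(n : ℝ))) := by
      intro n
      rw [hγ, hpush]
      refine measure_mono (Set.Iic_subset_Iic.2 ?_)
      have hnot : (-(n : ℝ)) ∉ S := hemp ▸ Set.notMem_empty _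
      have : ¬ h (-(n : ℝ)) ≤ a := by simpa [hSdef] using hnot
      exact (not_le.1 this).le
    have lim : Tendsto (fun n : ℕ => γ (Set.Iic (-(n : ℝ)))) atTop (nhds 0) := by
      have hint : (⋂ n : ℕ, Set.Iic (-(n : ℝ))) = ∅ := by
        ext z
        simp only [Set.mem_iInter, Set.mem_Iic, Set.mem_empty_iff_false, iff_false, not_forall,
          not_le]
        obtain ⟨n, hn⟩ := exists_nat_gt (-z)
        exact ⟨n, by linarith⟩
      have := tendsto_measure_iInter_atTop (μ := γ) (s := fun n : ℕ => Set.Iic (-(n : ℝ)))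
        (fun _ => measurableSet_Iic.nullMeasurableSet)
        (fun i j hij => Set.Iic_subset_Iic.2 (neg_le_neg (Nat.cast_le.2 hij)))
        ⟨0, measure_ne_top _ _⟩
      rw [hint, measure_empty] at this
      simpa [Function.comp_def] using this
    exact (le_antisymm (ge_of_tendsto lim (Eventually.of_forall key)) zero_le).symm
  · by_cases hbdd : BddAbove S
    · set b := sSup S with hb
      have hlow : ∀ x, x < b → γ (Set.Iic x) ≤ ν (Set.Iic a) := by
        intro x hx
        obtain ⟨s, hsS, hxs⟩ := exists_lt_of_lt_csSup hne hx
        rw [hγ, hpush]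
        exact measure_mono (Set.Iic_subset_Iic.2 ((hmono.monotone hxs.le).trans hsS))
      have hSsub : S ⊆ Set.Iic b := fun z hz => le_csSup hbdd hz
      have hsub2 : Set.Iio b ⊆ S := by
        intro z hz
        obtain ⟨s, hsS, hzs⟩ := exists_lt_of_lt_csSup hne hz
        exact Set.mem_preimage.2 (le_trans (hmono.monotone hzs.le) hsS)
      have hgb : γ {b} = 0 :=
        gaussianReal_absolutelyContinuous 0 one_ne_zero Real.volume_singleton
      have hIio : γ (Set.Iio b) = γ (Set.Iic b) := measure_congr (Iio_ae_eq_Iic' hgb)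
      have hSeq : γ S = γ (Set.Iic b) :=
        le_antisymm (measure_mono hSsub) (hIio ▸ measure_mono hsub2)
      have h1 : γ (Set.Iic b) ≤ ν (Set.Iic a) := by
        rw [← hIio]
        have hU : (⋃ n : ℕ, Set.Iic (b - 1 / (n + 1))) = Set.Iio b := by
          ext z
          simp only [Set.mem_iUnion, Set.mem_Iic, Set.mem_Iio]
          constructor
          · rintro ⟨n, hn⟩
            have : (0 : ℝ) < 1 / (n + 1) := by positivity
            linarith
          · intro hz
            obtain ⟨n, hn⟩ := exists_nat_one_div_lt (sub_pos.2 hz)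
            exact ⟨n, by linarith⟩
        have lim := tendsto_measure_iUnion_atTop (μ := γ)
          (s := fun n : ℕ => Set.Iic (b - 1 / (n + 1)))
          (fun i j hij => Set.Iic_subset_Iic.2 (by
            have : (1 : ℝ) / (j + 1) ≤ 1 / (i + 1) := by
              apply one_div_le_one_div_of_le (by positivity)
              exact_mod_cast add_le_add_left (Nat.cast_le.2 hij) 1
            linarith))
        rw [hU] at lim
        refine le_of_tendsto lim (Eventually.of_forall fun n => ?_)
        simp only [Function.comp]
        refine hlow _ ?_
        have : (0 : ℝ) < 1 / (n + 1) := by positivity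
        linarith
      have h2 : ν (Set.Iic a) ≤ γ (Set.Iic b) := by
        have hI : (⋂ n : ℕ, Set.Iic (b + 1 / (n + 1))) = Set.Iic b := by
          ext z
          simp only [Set.mem_iInter, Set.mem_Iic]
          constructor
          · intro hz
            by_contra hzb
            push_neg at hzb
            obtain ⟨n, hn⟩ := exists_nat_one_div_lt (sub_pos.2 hzb)
            have := hz n
            linarith
          · intro hz n
            have : (0 : ℝ) < 1 / (n + 1) := by positivity
            linarith
        have lim := tendsto_measure_iInter_atTop (μ := γ)
          (s := fun n : ℕ => Set.Iic (b + 1 / (n + 1)))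
          (fun _ => measurableSet_Iic.nullMeasurableSet)
          (fun i j hij => Set.Iic_subset_Iic.2 (by
            have : (1 : ℝ) / (j + 1) ≤ 1 / (i + 1) := by
              apply one_div_le_one_div_of_le (by positivity)
              exact_mod_cast add_le_add_left (Nat.cast_le.2 hij) 1
            linarith))
          ⟨0, measure_ne_top _ _⟩
        rw [hI] at lim
        refine ge_of_tendsto lim (Eventually.of_forall fun n => ?_)
        simp only [Function.comp]
        rw [hγ, hpush]
        refine measure_mono (Set.Iic_subset_Iic.2 ?_)
        have hnotin : b + 1 / (n + 1) ∉ S := by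
          intro hmem
          have hle := le_csSup hbdd hmem
          have : (0 : ℝ) < 1 / (n + 1) := by positivity
          rw [← hb] at hle
          linarith
        have : ¬ h (b + 1 / (n + 1)) ≤ a := by simpa [hSdef] using hnotin
        exact (not_le.1 this).le
      rw [hSeq]
      exact le_antisymm h1 h2
    · have hSuniv : S = Set.univ := by
        ext z
        simp only [Set.mem_univ, iff_true]
        obtain ⟨x, hxS, hzx⟩ := not_bddAbove_iff.1 hbdd z
        exact Set.mem_preimage.2 (le_trans (hmono.monotone hzx.le) hxS)
      rw [hSuniv, measure_univ]
      refine le_antisymm ?_ prob_le_one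
      have lim := tendsto_measure_Iic_atTop (μ := γ)
      rw [measure_univ] at lim
      refine le_of_tendsto lim (Eventually.of_forall fun x => ?_)
      rw [hγ, hpush]
      refine measure_mono (Set.Iic_subset_Iic.2 ?_)
      have hx : x ∈ S := hSuniv ▸ Set.mem_univ x
      exact hx

/-- Claim 2.18 of the paper: for an absolutely continuous probability measure `ν` and
the increasing rearrangement `h` transporting the standard Gaussian to `ν`, the set of
points where `h` has slope at least `δ` at all scales up to `1` has Gaussian measure
tending to `1` as `δ ↓ 0`. -/
theorem slope_set_full_measure (ν : Measure ℝ) (hprob : IsProbabilityMeasure ν)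
    (habs : ν ≪ (volume : Measure ℝ)) (h : ℝ → ℝ)
    (hS : ∀ x : ℝ, ∀ v : ℝ, v < h x → ν (Set.Iic v) < ν (Set.Iic (h x)))
    (hpush : ∀ x : ℝ, gaussianReal 0 1 (Set.Iic x) = ν (Set.Iic (h x))) :
    Tendsto
      (fun δ : ℝ => gaussianReal 0 1
        {x : ℝ | ∀ y ∈ Set.Icc (x - 1) (x + 1), y ≠ x → δ ≤ (h y - h x) / (y - x)})
      (nhdsWithin 0 (Set.Ioi 0)) (nhds 1) := by
  have hmono : StrictMono h := slope_aux_strictMono ν h hpush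
  have hmeas : Measurable h := hmono.monotone.measurable
  have hmap : Measure.map h (gaussianReal 0 1) = ν := slope_aux_map ν h hmono hpush
  set γ := gaussianReal 0 1 with hγ
  set D0 : Set ℝ := {x | HasDerivAt h 0 x} with hD0
  have hD0null : γ D0 = 0 := by
    have himg : volume (h '' D0) = 0 := by
      refine MeasureTheory.addHaar_image_eq_zero_of_det_fderivWithin_eq_zero volume
        (f' := fun _ => (1 : ℝ →L[ℝ] ℝ).smulRight 0) (fun x hx => ?_) (fun x _ => ?_)
      · exact hx.hasDerivWithinAt.hasFDerivWithinAt
      · simpa using MeasureTheory.det_one_smulRight (0 : ℝ)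
    have hν0 : ν (toMeasurable volume (h '' D0)) = 0 :=
      habs (by rw [measure_toMeasurable]; exact himg)
    have hγ0 : γ (h ⁻¹' toMeasurable volume (h '' D0)) = 0 := by
      rw [← hmap] at hν0
      rwa [Measure.map_apply hmeas (measurableSet_toMeasurable _ _)] at hν0
    refine measure_mono_null (fun x hx => ?_) hγ0
    exact subset_toMeasurable _ _ (Set.mem_image_of_mem h hx)
  have hndiff : γ {x | ¬ DifferentiableAt ℝ h x} = 0 := by
    have := hmono.monotone.ae_differentiableAt
    rw [ae_iff] at this
    exact gaussianReal_absolutelyContinuous 0 one_ne_zero (by simpa using this)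
  set G : Set ℝ := {x | ∃ c, 0 < c ∧ HasDerivAt h c x} with hG
  have hGc : γ Gᶜ = 0 := by
    refine measure_mono_null (fun x hx => ?_) (measure_union_null hndiff hD0null)
    by_cases hdiff : DifferentiableAt ℝ h x
    · right
      have hd : HasDerivAt h (deriv h x) x := hdiff.hasDerivAt
      have hnn : 0 ≤ deriv h x := by
        have hslope := hasDerivAt_iff_tendsto_slope.1 hd
        refine ge_of_tendsto hslope (eventually_nhdsWithin_of_forall fun y hy => ?_)
        have hy' : y ≠ x := hy
        rw [slope_def_field]
        rcases hy'.lt_or_gt with hlt | hgt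
        · refine div_nonneg_iff.2 (Or.inr ⟨?_, ?_⟩)
          · exact sub_nonpos.2 (hmono.monotone hlt.le)
          · linarith
        · apply div_nonneg
          · exact sub_nonneg.2 (hmono.monotone hgt.le)
          · linarith
      have hzero : deriv h x = 0 := by
        rcases eq_or_lt_of_le hnn with he | hlt
        · exact he.symm
        · exact absurd ⟨deriv h x, hlt, hd⟩ hx
      exact Set.mem_setOf.2 (hzero ▸ hd)
    · exact Or.inl hdiff
  set A : ℝ → Set ℝ := fun δ =>
    {x : ℝ | ∀ y ∈ Set.Icc (x - 1) (x + 1), y ≠ x → δ ≤ (h y - h x) / (y - x)} with hA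
  have hAanti : ∀ δ δ' : ℝ, δ ≤ δ' → A δ' ⊆ A δ :=
    fun δ δ' hle x hx y hy hne => le_trans hle (hx y hy hne)
  have hGsub : ∀ x ∈ G, ∃ δ > 0, x ∈ A δ := by
    rintro x ⟨c, hc, hd⟩
    have hlo := (hasDerivAt_iff_isLittleO.1 hd).def (by positivity : (0:ℝ) < c/2)
    rw [Metric.eventually_nhds_iff] at hlo
    obtain ⟨ε, hε, hball⟩ := hlo
    set r := min (ε / 2) 1 with hr
    have hrpos : 0 < r := lt_min (by linarith) one_pos
    have hr1 : r ≤ 1 := min_le_right _ _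
    have hrε : r < ε := lt_of_le_of_lt (min_le_left _ _) (by linarith)
    set δ0 := min (c / 2) (min (h (x + r) - h x) (h x - h (x - r))) with hδ0
    have hδ0pos : 0 < δ0 := by
      refine lt_min (by linarith) (lt_min ?_ ?_)
      · exact sub_pos.2 (hmono (by linarith))
      · exact sub_pos.2 (hmono (by linarith))
    refine ⟨δ0, hδ0pos, ?_⟩
    intro y hy hne
    obtain ⟨hy1, hy2⟩ := hy
    rcases le_or_gt |y - x| r with hnear | hfar
    · have hd2 : dist y x < ε := by
        rw [Real.dist_eq]; linarith
      have hb := hball hd2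
      have hyx : y - x ≠ 0 := sub_ne_zero.2 hne
      have habs2 : |(h y - h x) / (y - x) - c| ≤ c / 2 := by
        have heq : (h y - h x) / (y - x) - c = (h y - h x - (y - x) * c) / (y - x) := by
          field_simp
        rw [heq, abs_div, div_le_iff₀ (abs_pos.2 hyx)]
        simpa [Real.norm_eq_abs, smul_eq_mul] using hb
      have hlb := (abs_le.1 habs2).1
      calc δ0 ≤ c / 2 := min_le_left _ _
        _ ≤ (h y - h x) / (y - x) := by linarith
    · rcases hne.lt_or_gt with hlt | hgt
      · have hxy : x - y > r := by
          rw [abs_sub_comm, abs_of_pos (by linarith)] at hfar; exact hfar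
        have hhy : h y ≤ h (x - r) := hmono.monotone (by linarith)
        have heq : (h y - h x) / (y - x) = (h x - h y) / (x - y) := by
          rw [← neg_sub (h x) (h y), ← neg_sub x y, neg_div_neg_eq]
        rw [heq, le_div_iff₀ (by linarith)]
        have h1 : δ0 * (x - y) ≤ δ0 * 1 :=
          mul_le_mul_of_nonneg_left (by linarith) hδ0pos.le
        have h2 : δ0 ≤ h x - h (x - r) := le_trans (min_le_right _ _) (min_le_right _ _)
        linarith
      · have hxy : y - x > r := by
          rw [abs_of_pos (by linarith)] at hfar; exact hfar
        have hhy : h (x + r) ≤ h y := hmono.monotone (by linarith)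
        rw [le_div_iff₀ (by linarith)]
        have h1 : δ0 * (y - x) ≤ δ0 * 1 :=
          mul_le_mul_of_nonneg_left (by linarith) hδ0pos.le
        have h2 : δ0 ≤ h (x + r) - h x := le_trans (min_le_right _ _) (min_le_left _ _)
        linarith
  have hmonU : Monotone (fun n : ℕ => A (1 / (n + 1 : ℝ))) := by
    intro i j hij
    apply hAanti
    apply one_div_le_one_div_of_le (by positivity)
    exact_mod_cast add_le_add_left (Nat.cast_le.2 hij) 1
  have hUfull : γ (⋃ n : ℕ, A (1 / (n + 1 : ℝ))) = 1 := by
    refine le_antisymm prob_le_one ?_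
    calc (1 : ℝ≥0∞) = γ (G ∪ Gᶜ) := by rw [Set.union_compl_self, measure_univ]
      _ ≤ γ G + γ Gᶜ := measure_union_le _ _
      _ = γ G := by rw [hGc, add_zero]
      _ ≤ γ (⋃ n : ℕ, A (1 / (n + 1 : ℝ))) := by
          refine measure_mono fun x hxG => ?_
          obtain ⟨δ, hδ, hxA⟩ := hGsub x hxG
          obtain ⟨n, hn⟩ := exists_nat_one_div_lt hδ
          exact Set.mem_iUnion.2 ⟨n, hAanti _ _ hn.le hxA⟩
  have hlim : Tendsto (fun n : ℕ => γ (A (1 / (n + 1 : ℝ)))) atTop (nhds 1) := by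
    have := tendsto_measure_iUnion_atTop (μ := γ) hmonU
    rw [hUfull] at this
    simpa [Function.comp_def] using this
  show Tendsto (fun δ : ℝ => γ (A δ)) (nhdsWithin 0 (Set.Ioi 0)) (nhds 1)
  refine tendsto_order.2 ⟨fun a ha => ?_, fun a ha => ?_⟩
  · obtain ⟨N, hN⟩ := ((tendsto_order.1 hlim).1 a ha).exists
    have hev : Set.Ioo (0 : ℝ) (1 / (N + 1 : ℝ)) ∈ nhdsWithin 0 (Set.Ioi 0) :=
      Ioo_mem_nhdsGT (by positivity)
    filter_upwards [hev] with δ hδ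
    exact lt_of_lt_of_le hN (measure_mono (hAanti δ (1 / (N + 1 : ℝ)) hδ.2.le))
  · filter_upwards with δ
    exact lt_of_le_of_lt prob_le_one ha
end

section
/- Let μ be a norm on ℝ² and let u, v ∈ ℝ² be nonzero and linearly independent. Then the following three statements are equivalent: (1) every point of the closed segment joining u/μ(u) and v/μ(v) satisfies μ = 1 (equivalently, the segment is disjoint from the open unit ball {x : μ(x) < 1}); (2) for all s, t ≥ 0, μ(s·u + t·v) = s·μ(u) + t·μ(v); (3) there exist s, t > 0 with μ(s·u + t·v) = s·μ(u) + t·μ(v). -/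
/-- Claim 4.3 of the paper: characterisations of two directions lying on the same
flat edge of the unit ball of a norm on `ℝ²`. -/
theorem flat_edge_characterisation (mu : ℝ × ℝ → ℝ)
    (h_add : ∀ x y : ℝ × ℝ, mu (x + y) ≤ mu x + mu y)
    (h_smul : ∀ (c : ℝ) (x : ℝ × ℝ), mu (c • x) = |c| * mu x)
    (h_def : ∀ x : ℝ × ℝ, mu x = 0 → x = 0)
    (u v : ℝ × ℝ) (huv : LinearIndependent ℝ ![u, v]) :
    ((∀ t ∈ Set.Icc (0 : ℝ) 1,
        mu ((1 - t) • ((mu u)⁻¹ • u) + t • ((mu v)⁻¹ • v)) = 1) ↔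
      (∀ s t : ℝ, 0 ≤ s → 0 ≤ t → mu (s • u + t • v) = s * mu u + t * mu v)) ∧
    ((∀ s t : ℝ, 0 ≤ s → 0 ≤ t → mu (s • u + t • v) = s * mu u + t * mu v) ↔
      (∃ s t : ℝ, 0 < s ∧ 0 < t ∧ mu (s • u + t • v) = s * mu u + t * mu v)) := by
  have hmu0 : mu 0 = 0 := by
    have := h_smul 0 0
    simpa using this
  have hnonneg : ∀ x : ℝ × ℝ, 0 ≤ mu x := by
    intro x
    have h1 : mu (-x) = mu x := by
      have := h_smul (-1) x
      simpa using this
    have h2 := h_add x (-x)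
    rw [add_neg_cancel, hmu0, h1] at h2
    linarith
  have hu : u ≠ 0 := by
    have := huv.ne_zero 0
    simpa using this
  have hv : v ≠ 0 := by
    have := huv.ne_zero 1
    simpa using this
  have hmuu : 0 < mu u :=
    lt_of_le_of_ne (hnonneg u) (fun h => hu (h_def u h.symm))
  have hmuv : 0 < mu v :=
    lt_of_le_of_ne (hnonneg v) (fun h => hv (h_def v h.symm))
  set a := (mu u)⁻¹ • u with ha
  set b := (mu v)⁻¹ • v with hb
  have hmua : mu a = 1 := by
    rw [ha, h_smul, abs_of_pos (inv_pos.mpr hmuu)]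
    field_simp
  have hmub : mu b = 1 := by
    rw [hb, h_smul, abs_of_pos (inv_pos.mpr hmuv)]
    field_simp
  -- (1) → (2)
  have h12 : (∀ t ∈ Set.Icc (0:ℝ) 1, mu ((1 - t) • a + t • b) = 1) →
      ∀ s t : ℝ, 0 ≤ s → 0 ≤ t → mu (s • u + t • v) = s * mu u + t * mu v := by
    intro h1 s t hs ht
    set c := s * mu u + t * mu v with hc
    rcases eq_or_lt_of_le (show (0:ℝ) ≤ c by positivity) with hc0 | hc0
    · have hs0 : s = 0 := by nlinarith [mul_nonneg hs hmuu.le, mul_nonneg ht hmuv.le]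
      have ht0 : t = 0 := by nlinarith [mul_nonneg hs hmuu.le, mul_nonneg ht hmuv.le]
      simp [hs0, ht0, hmu0, hc]
    · set lam := t * mu v / c with hlam
      have hlam0 : 0 ≤ lam := by positivity
      have hlam1 : lam ≤ 1 := by
        rw [hlam, div_le_one hc0, hc]
        nlinarith [mul_nonneg hs hmuu.le]
      have h1l : 1 - lam = s * mu u / c := by
        rw [hlam]
        field_simp [hc]
        linarith
      have key := h1 lam ⟨hlam0, hlam1⟩
      have e1 : c * (s * mu u / c * (mu u)⁻¹) = s := by
        field_simp
      have e2 : c * (t * mu v / c * (mu v)⁻¹) = t := by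
        field_simp
      have hvec : c • ((1 - lam) • a + lam • b) = s • u + t • v := by
        rw [h1l, hlam, ha, hb]
        simp only [smul_add, smul_smul]
        rw [e1, e2]
      calc mu (s • u + t • v) = mu (c • ((1 - lam) • a + lam • b)) := by rw [hvec]
        _ = |c| * 1 := by rw [h_smul, key]
        _ = c := by rw [abs_of_pos hc0]; ring
  -- (3) → (1)
  have h31 : (∃ s t : ℝ, 0 < s ∧ 0 < t ∧ mu (s • u + t • v) = s * mu u + t * mu v) →
      ∀ lam ∈ Set.Icc (0:ℝ) 1, mu ((1 - lam) • a + lam • b) = 1 := by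
    rintro ⟨s, t, hs, ht, heq⟩ lam ⟨hl0, hl1⟩
    set p := s * mu u with hp
    set q := t * mu v with hq
    have hp0 : 0 < p := by positivity
    have hq0 : 0 < q := by positivity
    have hab : mu (p • a + q • b) = p + q := by
      have e1 : p • a = s • u := by
        rw [ha, smul_smul, hp]
        congr 1
        field_simp
      have e2 : q • b = t • v := by
        rw [hb, smul_smul, hq]
        congr 1
        field_simp
      rw [e1, e2, heq]
    have hub : mu ((1 - lam) • a + lam • b) ≤ 1 := by
      calc mu ((1 - lam) • a + lam • b) ≤ mu ((1 - lam) • a) + mu (lam • b) := h_add _ _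
        _ = (1 - lam) * mu a + lam * mu b := by
            rw [h_smul (1 - lam) a, h_smul lam b, abs_of_nonneg (by linarith : (0:ℝ) ≤ 1 - lam), abs_of_nonneg hl0]
        _ = 1 := by rw [hmua, hmub]; ring
    rcases eq_or_lt_of_le hl0 with h0 | h0
    · simp [← h0, hmua]
    rcases eq_or_lt_of_le hl1 with h1 | h1
    · simp [h1, hmub]
    · set c := min (p / (1 - lam)) (q / lam) with hcdef
      have hl1' : 0 < 1 - lam := by linarith
      have hc0 : 0 < c := lt_min (by positivity) (by positivity)
      have hc1 : c * (1 - lam) ≤ p := by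
        have h := min_le_left (p / (1 - lam)) (q / lam)
        rw [← hcdef, le_div_iff₀ hl1'] at h
        linarith
      have hc2 : c * lam ≤ q := by
        have h := min_le_right (p / (1 - lam)) (q / lam)
        rw [← hcdef, le_div_iff₀ h0] at h
        linarith
      have hdecomp : p • a + q • b =
          c • ((1 - lam) • a + lam • b) + ((p - c * (1 - lam)) • a + (q - c * lam) • b) := by
        module
      have hchain : p + q ≤ c * mu ((1 - lam) • a + lam • b) + (p - c * (1 - lam)) + (q - c * lam) := by
        calc p + q = mu (p • a + q • b) := hab.symm
          _ = mu (c • ((1 - lam) • a + lam • b) + ((p - c * (1 - lam)) • a + (q - c * lam) • b)) := by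
              rw [← hdecomp]
          _ ≤ mu (c • ((1 - lam) • a + lam • b)) + mu ((p - c * (1 - lam)) • a + (q - c * lam) • b) :=
              h_add _ _
          _ ≤ mu (c • ((1 - lam) • a + lam • b)) + (mu ((p - c * (1 - lam)) • a) + mu ((q - c * lam) • b)) := by
              linarith [h_add ((p - c * (1 - lam)) • a) ((q - c * lam) • b)]
          _ = c * mu ((1 - lam) • a + lam • b) + (p - c * (1 - lam)) + (q - c * lam) := by
              rw [h_smul c ((1 - lam) • a + lam • b), h_smul (p - c * (1 - lam)) a,
                h_smul (q - c * lam) b, hmua, hmub,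
                abs_of_pos hc0, abs_of_nonneg (by linarith : (0:ℝ) ≤ p - c * (1 - lam)),
                abs_of_nonneg (by linarith : (0:ℝ) ≤ q - c * lam)]
              ring
      have hge : 1 ≤ mu ((1 - lam) • a + lam • b) := by nlinarith
      linarith
  have h23 : (∀ s t : ℝ, 0 ≤ s → 0 ≤ t → mu (s • u + t • v) = s * mu u + t * mu v) →
      (∃ s t : ℝ, 0 < s ∧ 0 < t ∧ mu (s • u + t • v) = s * mu u + t * mu v) :=
    fun h2 => ⟨1, 1, one_pos, one_pos, h2 1 1 zero_le_one zero_le_one⟩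
  exact ⟨⟨h12, fun h2 => h31 (h23 h2)⟩, ⟨h23, fun h3 => h12 (h31 h3)⟩⟩
end

section
/- Let μ be a norm on ℝ² invariant under the maps (x,y) ↦ (x,−y), (x,y) ↦ (−x,y) and (x,y) ↦ (y,x). Let B = {x : μ(x) ≤ 1}, and for an angle θ write B(θ) for the unique positive number with μ(B(θ)e^{iθ}) = 1 (identifying ℝ² with ℂ). Say θ₁ and θ₂ are on the same flat edge of B if the segment joining B(θ₁)e^{iθ₁} and B(θ₂)e^{iθ₂} is disjoint from the interior of B, and say θ is a vertex direction if there are two distinct lines through B(θ)e^{iθ} each disjoint from the interior of B. Let 0 ≤ θ₁ < θ₂ < π/2 be such that either θ₁ and θ₂ are not on the same flat edge of B, or θ₁ is a vertex direction. Then there exists a constant c > 0 (depending on μ, θ₁, θ₂) such that for all R₁, R₂ ≥ 0: μ(R₁e^{iθ₁}) + c·R₂ ≤ μ(R₂e^{iθ₂}) + μ(R₁e^{iθ₁} − R₂e^{iθ₂}), and also μ(R₁e^{iθ₁}) + c·R₂ ≤ μ(R₂e^{−iθ₂}) + μ(R₁e^{iθ₁} − R₂e^{−iθ₂}). -/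
/-- The unit vector in direction `θ` (identifying `ℝ²` with `ℂ`). -/
noncomputable def dir (θ : ℝ) : ℝ × ℝ := (Real.cos θ, Real.sin θ)

lemma mu_zero' (mu : ℝ × ℝ → ℝ)
    (h_smul : ∀ (c : ℝ) (x : ℝ × ℝ), mu (c • x) = |c| * mu x) : mu 0 = 0 := by
  have := h_smul 0 0
  simpa using this

lemma mu_nonneg' (mu : ℝ × ℝ → ℝ)
    (h_add : ∀ x y : ℝ × ℝ, mu (x + y) ≤ mu x + mu y)
    (h_smul : ∀ (c : ℝ) (x : ℝ × ℝ), mu (c • x) = |c| * mu x)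
    (x : ℝ × ℝ) : 0 ≤ mu x := by
  have h2 : mu (-x) = mu x := by
    have := h_smul (-1) x; simpa using this
  have h1 := h_add x (-x)
  rw [add_neg_cancel, mu_zero' mu h_smul, h2] at h1
  linarith

lemma mu_smul' (mu : ℝ × ℝ → ℝ)
    (h_smul : ∀ (c : ℝ) (x : ℝ × ℝ), mu (c • x) = |c| * mu x)
    (c : ℝ) (hc : 0 ≤ c) (x : ℝ × ℝ) : mu (c • x) = c * mu x := by
  rw [h_smul, abs_of_nonneg hc]

lemma mu_pos' (mu : ℝ × ℝ → ℝ)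
    (h_add : ∀ x y : ℝ × ℝ, mu (x + y) ≤ mu x + mu y)
    (h_smul : ∀ (c : ℝ) (x : ℝ × ℝ), mu (c • x) = |c| * mu x)
    (h_def : ∀ x : ℝ × ℝ, mu x = 0 → x = 0)
    (x : ℝ × ℝ) (hx : x ≠ 0) : 0 < mu x := by
  rcases (mu_nonneg' mu h_add h_smul x).eq_or_lt with h | h
  · exact absurd (h_def x h.symm) hx
  · exact h

/-- Key "ε-argument": if the triangle inequality defect in direction `z` along `u`
can be made arbitrarily small, then `mu` is additive on the cone spanned by `u, z`. -/
lemma key_B (mu : ℝ × ℝ → ℝ)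
    (h_add : ∀ x y : ℝ × ℝ, mu (x + y) ≤ mu x + mu y)
    (h_smul : ∀ (c : ℝ) (x : ℝ × ℝ), mu (c • x) = |c| * mu x)
    (u z : ℝ × ℝ)
    (hH : ∀ ε : ℝ, 0 < ε → ∃ s, 0 ≤ s ∧ mu (s • u - z) < s * mu u - mu z + ε)
    (a b : ℝ) (ha : 0 ≤ a) (hb : 0 ≤ b) :
    b * mu u + a * mu z ≤ mu (b • u + a • z) := by
  have hstep : ∀ ε : ℝ, 0 < ε →
      b * mu u + a * mu z ≤ mu (b • u + a • z) + (1 + a) * ε := by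
    intro ε hε
    obtain ⟨s, hs0, hs⟩ := hH ε hε
    have hS : 0 ≤ (1 + a) * s + b := by positivity
    have h1 : ((1 + a) * s + b) * mu u ≤ mu (((1 + a) * s + b) • u - z) + mu z := by
      have e : (((1 + a) * s + b) • u - z) + z = ((1 + a) * s + b) • u := by module
      calc ((1 + a) * s + b) * mu u = mu (((1 + a) * s + b) • u) :=
            (mu_smul' mu h_smul _ hS u).symm
        _ = mu ((((1 + a) * s + b) • u - z) + z) := by rw [e]
        _ ≤ _ := h_add _ _
    have h2 : mu (((1 + a) * s + b) • u - z) ≤ (1 + a) * mu (s • u - z) + mu (b • u + a • z) := by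
      have e : ((1 + a) * s + b) • u - z = (1 + a) • (s • u - z) + (b • u + a • z) := by module
      calc mu (((1 + a) * s + b) • u - z)
          = mu ((1 + a) • (s • u - z) + (b • u + a • z)) := by rw [e]
        _ ≤ mu ((1 + a) • (s • u - z)) + mu (b • u + a • z) := h_add _ _
        _ = (1 + a) * mu (s • u - z) + mu (b • u + a • z) := by
            rw [mu_smul' mu h_smul _ (by linarith) _]
    have h3 : (1 + a) * mu (s • u - z) ≤ (1 + a) * (s * mu u - mu z + ε) :=
      mul_le_mul_of_nonneg_left hs.le (by linarith)
    nlinarith [h1, h2, h3]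
  by_contra hc
  push_neg at hc
  set d := b * mu u + a * mu z - mu (b • u + a • z) with hd
  have hd0 : 0 < d := by simp only [hd]; linarith
  have h1a : (0:ℝ) < 1 + a := by linarith
  have := hstep (d / (2 * (1 + a))) (by positivity)
  have he : (1 + a) * (d / (2 * (1 + a))) = d / 2 := by field_simp
  rw [he] at this
  simp only [hd] at this
  linarith

/-- If a linear functional `ℓ ≤ mu` attains `mu` at `u` and the defect in
direction `z` is arbitrarily small, then `ℓ z ≥ mu z`. -/
lemma key_A2 (mu : ℝ × ℝ → ℝ)
    (u z : ℝ × ℝ) (p q : ℝ)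
    (hH : ∀ ε : ℝ, 0 < ε → ∃ s, 0 ≤ s ∧ mu (s • u - z) < s * mu u - mu z + ε)
    (hle : ∀ x : ℝ × ℝ, p * x.1 + q * x.2 ≤ mu x)
    (hu : p * u.1 + q * u.2 = mu u) :
    mu z ≤ p * z.1 + q * z.2 := by
  apply le_of_forall_pos_le_add
  intro ε hε
  obtain ⟨s, hs0, hs⟩ := hH ε hε
  have h1 := hle (s • u - z)
  have e1 : (s • u - z).1 = s * u.1 - z.1 := by simp
  have e2 : (s • u - z).2 = s * u.2 - z.2 := by simp
  rw [e1, e2] at h1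
  have h2 : s * (p * u.1 + q * u.2) = s * mu u := by rw [hu]
  nlinarith [h1, hs, h2]

/-- From a line through `u'` disjoint from the open unit ball, produce a supporting
linear functional. -/
lemma support_line (mu : ℝ × ℝ → ℝ)
    (h_add : ∀ x y : ℝ × ℝ, mu (x + y) ≤ mu x + mu y)
    (h_smul : ∀ (c : ℝ) (x : ℝ × ℝ), mu (c • x) = |c| * mu x)
    (u' d : ℝ × ℝ) (hd : d ≠ 0)
    (hline : ∀ t : ℝ, 1 ≤ mu (u' + t • d)) :
    ∃ p q : ℝ, (∀ x : ℝ × ℝ, p * x.1 + q * x.2 ≤ mu x) ∧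
      (p * u'.1 + q * u'.2 = 1) ∧ (p * d.1 + q * d.2 = 0) ∧
      (∀ x : ℝ × ℝ, p * x.1 + q * x.2 = 0 → d.1 * x.2 = d.2 * x.1) := by
  have hmu0 : mu 0 = 0 := mu_zero' mu h_smul
  have hd' : d.1 ≠ 0 ∨ d.2 ≠ 0 := by
    by_contra h; push_neg at h
    exact hd (Prod.ext h.1 h.2)
  obtain ⟨D, hDdef⟩ : ∃ D : ℝ, D = d.1 * u'.2 - d.2 * u'.1 := ⟨_, rfl⟩
  have hD : D ≠ 0 := by
    intro hD0
    rw [hD0] at hDdef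
    rcases hd' with h1 | h2
    · have hl := hline (-(u'.1 / d.1))
      have e : u' + (-(u'.1 / d.1)) • d = 0 := by
        apply Prod.ext
        · show u'.1 + (-(u'.1 / d.1)) * d.1 = 0
          field_simp
          ring
        · show u'.2 + (-(u'.1 / d.1)) * d.2 = 0
          field_simp
          linarith [hDdef]
      rw [e, hmu0] at hl; linarith
    · have hl := hline (-(u'.2 / d.2))
      have e : u' + (-(u'.2 / d.2)) • d = 0 := by
        apply Prod.ext
        · show u'.1 + (-(u'.2 / d.2)) * d.1 = 0
          field_simp
          linarith [hDdef]
        · show u'.2 + (-(u'.2 / d.2)) * d.2 = 0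
          field_simp
          ring
      rw [e, hmu0] at hl; linarith
  have hdive : ∀ y1 y2 : ℝ, D * (-d.2 / D * y1 + d.1 / D * y2) = -d.2 * y1 + d.1 * y2 := by
    intro y1 y2; field_simp
  refine ⟨-d.2 / D, d.1 / D, ?_, ?_, ?_, ?_⟩
  · -- the functional is dominated by mu
    intro x
    obtain ⟨r, hrdef⟩ : ∃ r : ℝ, r = -d.2 / D * x.1 + d.1 / D * x.2 := ⟨_, rfl⟩
    rw [← hrdef]
    rcases le_or_gt r 0 with h | h
    · exact h.trans (mu_nonneg' mu h_add h_smul x)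
    · have hrne : r ≠ 0 := ne_of_gt h
      have hr : -d.2 * x.1 + d.1 * x.2 = r * D := by
        have e := hdive x.1 x.2
        rw [← hrdef] at e
        linarith [e]
      have hu'e : -d.2 * u'.1 + d.1 * u'.2 = D := by rw [hDdef]; ring
      have hkey : ∃ t : ℝ, x = r • (u' + t • d) := by
        rcases hd' with h1 | h2
        · have hrd : r * d.1 ≠ 0 := mul_ne_zero hrne h1
          refine ⟨(x.1 - r * u'.1) / (r * d.1), ?_⟩
          apply Prod.ext
          · show x.1 = r * (u'.1 + (x.1 - r * u'.1) / (r * d.1) * d.1)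
            field_simp
            ring
          · show x.2 = r * (u'.2 + (x.1 - r * u'.1) / (r * d.1) * d.2)
            field_simp
            linear_combination hr - r * hu'e
        · have hrd : r * d.2 ≠ 0 := mul_ne_zero hrne h2
          refine ⟨(x.2 - r * u'.2) / (r * d.2), ?_⟩
          apply Prod.ext
          · show x.1 = r * (u'.1 + (x.2 - r * u'.2) / (r * d.2) * d.1)
            field_simp
            linear_combination (-1) * hr + r * hu'e
          · show x.2 = r * (u'.2 + (x.2 - r * u'.2) / (r * d.2) * d.2)
            field_simp
            ring
      obtain ⟨t, ht⟩ := hkey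
      have h2 : mu x = r * mu (u' + t • d) := by
        rw [ht]; exact mu_smul' mu h_smul r h.le _
      calc r = r * 1 := by ring
        _ ≤ r * mu (u' + t • d) := mul_le_mul_of_nonneg_left (hline t) h.le
        _ = mu x := h2.symm
  · -- value 1 at u'
    have e := hdive u'.1 u'.2
    have e2 : D * (-d.2 / D * u'.1 + d.1 / D * u'.2) = D * 1 := by
      rw [e, hDdef]; ring
    exact mul_left_cancel₀ hD e2
  · -- vanishes on d
    field_simp
    ring
  · -- kernel characterization
    intro x hx
    have e := hdive x.1 x.2
    rw [hx, mul_zero] at e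
    linarith

lemma pair_det_ne (d₁ d₂ : ℝ × ℝ) (h : LinearIndependent ℝ ![d₁, d₂]) :
    d₁.1 * d₂.2 - d₁.2 * d₂.1 ≠ 0 := by
  rw [linearIndependent_fin2] at h
  simp only [Matrix.cons_val_one, Matrix.head_cons, Matrix.cons_val_zero] at h
  obtain ⟨h2, h3⟩ := h
  intro hdet
  have hd' : d₂.1 ≠ 0 ∨ d₂.2 ≠ 0 := by
    by_contra hcc; push_neg at hcc
    exact h2 (Prod.ext hcc.1 hcc.2)
  rcases hd' with h4 | h4
  · refine h3 (d₁.1 / d₂.1) (Prod.ext ?_ ?_)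
    · show d₁.1 / d₂.1 * d₂.1 = d₁.1
      field_simp
    · show d₁.1 / d₂.1 * d₂.2 = d₁.2
      field_simp
      linarith [hdet]
  · refine h3 (d₁.2 / d₂.2) (Prod.ext ?_ ?_)
    · show d₁.2 / d₂.2 * d₂.1 = d₁.1
      field_simp
      linarith [hdet]
    · show d₁.2 / d₂.2 * d₂.2 = d₁.2
      field_simp

/-- Claim 4.4 of the paper: quantitative cost of going in a wrong direction, for a
norm on `ℝ²` with lattice symmetries, when `θ₁, θ₂` are not on the same flat edge
of the unit ball, or `θ₁` is a vertex direction. -/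
theorem wrong_direction_cost (mu : ℝ × ℝ → ℝ)
    (h_add : ∀ x y : ℝ × ℝ, mu (x + y) ≤ mu x + mu y)
    (h_smul : ∀ (c : ℝ) (x : ℝ × ℝ), mu (c • x) = |c| * mu x)
    (h_def : ∀ x : ℝ × ℝ, mu x = 0 → x = 0)
    (h_flipy : ∀ x y : ℝ, mu (x, -y) = mu (x, y))
    (h_flipx : ∀ x y : ℝ, mu (-x, y) = mu (x, y))
    (h_swap : ∀ x y : ℝ, mu (y, x) = mu (x, y))
    (θ₁ θ₂ : ℝ) (hθ₁ : 0 ≤ θ₁) (hθ₁₂ : θ₁ < θ₂) (hθ₂ : θ₂ < Real.pi / 2)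
    (hcond :
      (¬ ∀ t ∈ Set.Icc (0 : ℝ) 1,
          1 ≤ mu ((1 - t) • ((mu (dir θ₁))⁻¹ • dir θ₁) +
            t • ((mu (dir θ₂))⁻¹ • dir θ₂))) ∨
      (∃ d₁ d₂ : ℝ × ℝ, LinearIndependent ℝ ![d₁, d₂] ∧
        (∀ t : ℝ, 1 ≤ mu ((mu (dir θ₁))⁻¹ • dir θ₁ + t • d₁)) ∧
        (∀ t : ℝ, 1 ≤ mu ((mu (dir θ₁))⁻¹ • dir θ₁ + t • d₂)))) :
    ∃ c : ℝ, 0 < c ∧ ∀ R₁ R₂ : ℝ, 0 ≤ R₁ → 0 ≤ R₂ →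
      mu (R₁ • dir θ₁) + c * R₂ ≤ mu (R₂ • dir θ₂) + mu (R₁ • dir θ₁ - R₂ • dir θ₂) ∧
      mu (R₁ • dir θ₁) + c * R₂ ≤
        mu (R₂ • dir (-θ₂)) + mu (R₁ • dir θ₁ - R₂ • dir (-θ₂)) := by
  have hπ := Real.pi_pos
  have hθ₂pos : 0 < θ₂ := lt_of_le_of_lt hθ₁ hθ₁₂
  have hc₁ : 0 < Real.cos θ₁ := Real.cos_pos_of_mem_Ioo ⟨by linarith, by linarith⟩
  have hs₁ : 0 ≤ Real.sin θ₁ := Real.sin_nonneg_of_nonneg_of_le_pi hθ₁ (by linarith)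
  have hc₂ : 0 < Real.cos θ₂ := Real.cos_pos_of_mem_Ioo ⟨by linarith, hθ₂⟩
  have hs₂ : 0 < Real.sin θ₂ := Real.sin_pos_of_pos_of_lt_pi hθ₂pos (by linarith)
  have hsub : 0 < Real.sin θ₂ * Real.cos θ₁ - Real.cos θ₂ * Real.sin θ₁ := by
    have h := Real.sin_pos_of_pos_of_lt_pi (x := θ₂ - θ₁) (by linarith) (by linarith)
    rw [Real.sin_sub] at h; linarith
  have hadd12 : 0 < Real.sin θ₁ * Real.cos θ₂ + Real.cos θ₁ * Real.sin θ₂ := by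
    have h := Real.sin_pos_of_pos_of_lt_pi (x := θ₁ + θ₂) (by linarith) (by linarith)
    rw [Real.sin_add] at h; linarith
  have hweq : dir (-θ₂) = ((Real.cos θ₂, -Real.sin θ₂) : ℝ × ℝ) := by
    simp [dir, Real.cos_neg, Real.sin_neg]
  have hveq : dir θ₂ = ((Real.cos θ₂, Real.sin θ₂) : ℝ × ℝ) := rfl
  have hune : dir θ₁ ≠ 0 := by
    intro hz
    have h1 := congrArg Prod.fst hz
    have : Real.cos θ₁ = 0 := h1
    linarith
  have hvne : dir θ₂ ≠ 0 := by
    intro hz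
    have h1 := congrArg Prod.fst hz
    have : Real.cos θ₂ = 0 := h1
    linarith
  have hwne : dir (-θ₂) ≠ 0 := by
    rw [hweq]
    intro hz
    have h1 := congrArg Prod.fst hz
    have : Real.cos θ₂ = 0 := h1
    linarith
  have hm₁ : 0 < mu (dir θ₁) := mu_pos' mu h_add h_smul h_def _ hune
  have hm₂ : 0 < mu (dir θ₂) := mu_pos' mu h_add h_smul h_def _ hvne
  have hmw : mu (dir (-θ₂)) = mu (dir θ₂) := by
    rw [hweq, hveq]
    exact h_flipy (Real.cos θ₂) (Real.sin θ₂)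
  -- vertex case kills any independent direction
  have hvert : ∀ z : ℝ × ℝ,
      (dir θ₁).1 * z.2 - (dir θ₁).2 * z.1 ≠ 0 →
      (∃ d₁ d₂ : ℝ × ℝ, LinearIndependent ℝ ![d₁, d₂] ∧
        (∀ t : ℝ, 1 ≤ mu ((mu (dir θ₁))⁻¹ • dir θ₁ + t • d₁)) ∧
        (∀ t : ℝ, 1 ≤ mu ((mu (dir θ₁))⁻¹ • dir θ₁ + t • d₂))) →
      ¬ (∀ ε : ℝ, 0 < ε → ∃ s, 0 ≤ s ∧
          mu (s • dir θ₁ - z) < s * mu (dir θ₁) - mu z + ε) := by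
    rintro z hdet ⟨d₁, d₂, hli, hl1, hl2⟩ hH
    have hd1 : d₁ ≠ 0 := by
      have := hli.ne_zero 0; simpa using this
    have hd2 : d₂ ≠ 0 := by
      have := hli.ne_zero 1; simpa using this
    obtain ⟨p₁, q₁, hle₁, hu'₁, hd0₁, hker₁⟩ :=
      support_line mu h_add h_smul ((mu (dir θ₁))⁻¹ • dir θ₁) d₁ hd1 hl1
    obtain ⟨p₂, q₂, hle₂, hu'₂, hd0₂, hker₂⟩ :=
      support_line mu h_add h_smul ((mu (dir θ₁))⁻¹ • dir θ₁) d₂ hd2 hl2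
    have hpu : ∀ p q : ℝ,
        p * ((mu (dir θ₁))⁻¹ • dir θ₁).1 + q * ((mu (dir θ₁))⁻¹ • dir θ₁).2 = 1 →
        p * (dir θ₁).1 + q * (dir θ₁).2 = mu (dir θ₁) := by
      intro p q hpq
      have e1 : ((mu (dir θ₁))⁻¹ • dir θ₁).1 = (mu (dir θ₁))⁻¹ * (dir θ₁).1 := rfl
      have e2 : ((mu (dir θ₁))⁻¹ • dir θ₁).2 = (mu (dir θ₁))⁻¹ * (dir θ₁).2 := rfl
      rw [e1, e2] at hpq
      field_simp at hpq
      linarith [hpq]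
    have hpu₁ := hpu p₁ q₁ hu'₁
    have hpu₂ := hpu p₂ q₂ hu'₂
    have hz₁ : p₁ * z.1 + q₁ * z.2 = mu z :=
      le_antisymm (hle₁ z) (key_A2 mu (dir θ₁) z p₁ q₁ hH hle₁ hpu₁)
    have hz₂ : p₂ * z.1 + q₂ * z.2 = mu z :=
      le_antisymm (hle₂ z) (key_A2 mu (dir θ₁) z p₂ q₂ hH hle₂ hpu₂)
    have hp12 : p₁ = p₂ := by
      have h5 : (p₁ - p₂) * ((dir θ₁).1 * z.2 - (dir θ₁).2 * z.1) = 0 := by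
        linear_combination z.2 * hpu₁ - z.2 * hpu₂ - (dir θ₁).2 * hz₁ + (dir θ₁).2 * hz₂
      rcases mul_eq_zero.mp h5 with h | h
      · linarith [h]
      · exact absurd h hdet
    have hq12 : q₁ = q₂ := by
      have h6 : (q₁ - q₂) * ((dir θ₁).1 * z.2 - (dir θ₁).2 * z.1) = 0 := by
        linear_combination (dir θ₁).1 * hz₁ - (dir θ₁).1 * hz₂ - z.1 * hpu₁ + z.1 * hpu₂
      rcases mul_eq_zero.mp h6 with h | h
      · linarith [h]
      · exact absurd h hdet
    have h7 : p₁ * d₂.1 + q₁ * d₂.2 = 0 := by rw [hp12, hq12]; exact hd0₂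
    have h8 := hker₁ d₂ h7
    exact pair_det_ne d₁ d₂ hli (by linarith [h8])
  -- flat-edge case, direction θ₂
  have hflatv :
      (¬ ∀ t ∈ Set.Icc (0 : ℝ) 1,
          1 ≤ mu ((1 - t) • ((mu (dir θ₁))⁻¹ • dir θ₁) +
            t • ((mu (dir θ₂))⁻¹ • dir θ₂))) →
      ¬ (∀ ε : ℝ, 0 < ε → ∃ s, 0 ≤ s ∧
          mu (s • dir θ₁ - dir θ₂) < s * mu (dir θ₁) - mu (dir θ₂) + ε) := by
    intro hflat hH
    apply hflat
    intro t ht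
    have hB := key_B mu h_add h_smul (dir θ₁) (dir θ₂) hH (t / mu (dir θ₂))
      ((1 - t) / mu (dir θ₁)) (div_nonneg ht.1 hm₂.le)
      (div_nonneg (by linarith [ht.2]) hm₁.le)
    have e : ((1 - t) / mu (dir θ₁)) • dir θ₁ + (t / mu (dir θ₂)) • dir θ₂
        = (1 - t) • ((mu (dir θ₁))⁻¹ • dir θ₁) + t • ((mu (dir θ₂))⁻¹ • dir θ₂) := by
      rw [smul_smul, smul_smul, div_eq_mul_inv, div_eq_mul_inv]
    have e2 : (1 - t) / mu (dir θ₁) * mu (dir θ₁) + t / mu (dir θ₂) * mu (dir θ₂) = 1 := by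
      field_simp
      ring
    rw [e] at hB
    linarith [hB]
  -- flat-edge case, direction -θ₂ (uses the reflection symmetry)
  have hflatw :
      (¬ ∀ t ∈ Set.Icc (0 : ℝ) 1,
          1 ≤ mu ((1 - t) • ((mu (dir θ₁))⁻¹ • dir θ₁) +
            t • ((mu (dir θ₂))⁻¹ • dir θ₂))) →
      ¬ (∀ ε : ℝ, 0 < ε → ∃ s, 0 ≤ s ∧
          mu (s • dir θ₁ - dir (-θ₂)) < s * mu (dir θ₁) - mu (dir (-θ₂)) + ε) := by
    intro hflat hH
    have hstar : ∀ a b : ℝ, 0 ≤ a → 0 ≤ b →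
        b * mu (dir θ₁) + a * mu (dir θ₂) ≤
          mu (b • ((Real.cos θ₁, -Real.sin θ₁) : ℝ × ℝ) + a • dir θ₂) := by
      intro a b ha hb
      have hB := key_B mu h_add h_smul (dir θ₁) (dir (-θ₂)) hH a b ha hb
      rw [hmw] at hB
      have e1 : b • dir θ₁ + a • dir (-θ₂)
          = ((b * Real.cos θ₁ + a * Real.cos θ₂,
              b * Real.sin θ₁ - a * Real.sin θ₂) : ℝ × ℝ) := by
        rw [hweq]
        apply Prod.ext
        · show b * Real.cos θ₁ + a * Real.cos θ₂ = b * Real.cos θ₁ + a * Real.cos θ₂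
          rfl
        · show b * Real.sin θ₁ + a * -Real.sin θ₂ = b * Real.sin θ₁ - a * Real.sin θ₂
          ring
      have e2 : b • ((Real.cos θ₁, -Real.sin θ₁) : ℝ × ℝ) + a • dir θ₂
          = ((b * Real.cos θ₁ + a * Real.cos θ₂,
              -(b * Real.sin θ₁ - a * Real.sin θ₂)) : ℝ × ℝ) := by
        apply Prod.ext
        · show b * Real.cos θ₁ + a * Real.cos θ₂ = b * Real.cos θ₁ + a * Real.cos θ₂
          rfl
        · show b * -Real.sin θ₁ + a * Real.sin θ₂ = -(b * Real.sin θ₁ - a * Real.sin θ₂)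
          ring
      rw [e1] at hB
      rw [e2, h_flipy]
      exact hB
    -- decomposition of dir θ₁ in the cone spanned by the reflected dir θ₁ and dir θ₂
    obtain ⟨α, hαdef⟩ : ∃ α : ℝ, α = (Real.sin θ₂ * Real.cos θ₁ - Real.cos θ₂ * Real.sin θ₁) /
        (Real.sin θ₁ * Real.cos θ₂ + Real.cos θ₁ * Real.sin θ₂) := ⟨_, rfl⟩
    obtain ⟨β, hβdef⟩ : ∃ β : ℝ, β = 2 * Real.sin θ₁ * Real.cos θ₁ /
        (Real.sin θ₁ * Real.cos θ₂ + Real.cos θ₁ * Real.sin θ₂) := ⟨_, rfl⟩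
    have hα : 0 ≤ α := by rw [hαdef]; exact div_nonneg hsub.le hadd12.le
    have hβ : 0 ≤ β := by
      rw [hβdef]
      exact div_nonneg (by positivity) hadd12.le
    have hdc : α * Real.cos θ₁ + β * Real.cos θ₂ = Real.cos θ₁ := by
      rw [hαdef, hβdef]
      field_simp
      ring
    have hds : α * -Real.sin θ₁ + β * Real.sin θ₂ = Real.sin θ₁ := by
      rw [hαdef, hβdef]
      field_simp
      ring
    have hxdec : α • ((Real.cos θ₁, -Real.sin θ₁) : ℝ × ℝ) + β • dir θ₂ = dir θ₁ := by
      apply Prod.ext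
      · show α * Real.cos θ₁ + β * Real.cos θ₂ = Real.cos θ₁
        exact hdc
      · show α * -Real.sin θ₁ + β * Real.sin θ₂ = Real.sin θ₁
        exact hds
    have hdagger : mu (dir θ₁) = α * mu (dir θ₁) + β * mu (dir θ₂) := by
      have hge := hstar β α hβ hα
      rw [hxdec] at hge
      have hle2 : mu (dir θ₁) ≤ α * mu (dir θ₁) + β * mu (dir θ₂) := by
        conv_lhs => rw [← hxdec]
        have t1 := h_add (α • ((Real.cos θ₁, -Real.sin θ₁) : ℝ × ℝ)) (β • dir θ₂)
        have t2 : mu (α • ((Real.cos θ₁, -Real.sin θ₁) : ℝ × ℝ))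
            = α * mu ((Real.cos θ₁, -Real.sin θ₁) : ℝ × ℝ) := mu_smul' mu h_smul α hα _
        have t3 : mu ((Real.cos θ₁, -Real.sin θ₁) : ℝ × ℝ) = mu (dir θ₁) := by
          rw [show dir θ₁ = ((Real.cos θ₁, Real.sin θ₁) : ℝ × ℝ) from rfl]
          exact h_flipy _ _
        have t4 := mu_smul' mu h_smul β hβ (dir θ₂)
        have t5 : α * mu ((Real.cos θ₁, -Real.sin θ₁) : ℝ × ℝ) = α * mu (dir θ₁) := by
          rw [t3]
        linarith [t1, t2, t4, t5]
      linarith [hge, hle2]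
    apply hflat
    intro t ht
    obtain ⟨b, hbdef⟩ : ∃ b : ℝ, b = (1 - t) / mu (dir θ₁) := ⟨_, rfl⟩
    obtain ⟨a, hadef⟩ : ∃ a : ℝ, a = t / mu (dir θ₂) := ⟨_, rfl⟩
    have hb : 0 ≤ b := by rw [hbdef]; exact div_nonneg (by linarith [ht.2]) hm₁.le
    have ha : 0 ≤ a := by rw [hadef]; exact div_nonneg ht.1 hm₂.le
    have e : (1 - t) • ((mu (dir θ₁))⁻¹ • dir θ₁) + t • ((mu (dir θ₂))⁻¹ • dir θ₂)
        = (b * α) • ((Real.cos θ₁, -Real.sin θ₁) : ℝ × ℝ) + (b * β + a) • dir θ₂ := by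
      apply Prod.ext
      · show (1 - t) * ((mu (dir θ₁))⁻¹ * Real.cos θ₁) + t * ((mu (dir θ₂))⁻¹ * Real.cos θ₂)
            = b * α * Real.cos θ₁ + (b * β + a) * Real.cos θ₂
        rw [hbdef, hadef]
        linear_combination (-((1 - t) / mu (dir θ₁))) * hdc
      · show (1 - t) * ((mu (dir θ₁))⁻¹ * Real.sin θ₁) + t * ((mu (dir θ₂))⁻¹ * Real.sin θ₂)
            = b * α * -Real.sin θ₁ + (b * β + a) * Real.sin θ₂
        rw [hbdef, hadef]
        linear_combination (-((1 - t) / mu (dir θ₁))) * hds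
    have hfin := hstar (b * β + a) (b * α) (by positivity) (mul_nonneg hb hα)
    rw [← e] at hfin
    have hbm : b * mu (dir θ₁) = 1 - t := by
      rw [hbdef]; field_simp
    have ham : a * mu (dir θ₂) = t := by
      rw [hadef]; field_simp
    have hone : b * α * mu (dir θ₁) + (b * β + a) * mu (dir θ₂) = 1 := by
      have h9 : b * mu (dir θ₁) = b * (α * mu (dir θ₁) + β * mu (dir θ₂)) := by
        rw [← hdagger]
      nlinarith [h9, hbm, ham]
    linarith [hfin, hone]
  -- determinants
  have hdetv : (dir θ₁).1 * (dir θ₂).2 - (dir θ₁).2 * (dir θ₂).1 ≠ 0 := by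
    show Real.cos θ₁ * Real.sin θ₂ - Real.sin θ₁ * Real.cos θ₂ ≠ 0
    intro h; linarith [hsub]
  have hdetw : (dir θ₁).1 * (dir (-θ₂)).2 - (dir θ₁).2 * (dir (-θ₂)).1 ≠ 0 := by
    have hrw : (dir θ₁).1 * (dir (-θ₂)).2 - (dir θ₁).2 * (dir (-θ₂)).1
        = -(Real.sin θ₁ * Real.cos θ₂ + Real.cos θ₁ * Real.sin θ₂) := by
      rw [hweq]
      show Real.cos θ₁ * -Real.sin θ₂ - Real.sin θ₁ * Real.cos θ₂ = _
      ring
    rw [hrw]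
    intro h; linarith [hadd12]
  -- combine
  have hnH : (¬ ∀ ε : ℝ, 0 < ε → ∃ s, 0 ≤ s ∧
        mu (s • dir θ₁ - dir θ₂) < s * mu (dir θ₁) - mu (dir θ₂) + ε) ∧
      (¬ ∀ ε : ℝ, 0 < ε → ∃ s, 0 ≤ s ∧
        mu (s • dir θ₁ - dir (-θ₂)) < s * mu (dir θ₁) - mu (dir (-θ₂)) + ε) := by
    rcases hcond with hflat | hvertdata
    · exact ⟨hflatv hflat, hflatw hflat⟩
    · exact ⟨hvert (dir θ₂) hdetv hvertdata, hvert (dir (-θ₂)) hdetw hvertdata⟩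
  obtain ⟨hnv, hnw⟩ := hnH
  push_neg at hnv hnw
  obtain ⟨ε₁, hε₁, hb₁⟩ := hnv
  obtain ⟨ε₂, hε₂, hb₂⟩ := hnw
  refine ⟨min ε₁ ε₂, lt_min hε₁ hε₂, ?_⟩
  intro R₁ R₂ hR₁ hR₂
  have main : ∀ z : ℝ × ℝ, ∀ ε : ℝ,
      (∀ s, 0 ≤ s → s * mu (dir θ₁) - mu z + ε ≤ mu (s • dir θ₁ - z)) →
      min ε₁ ε₂ ≤ ε →
      mu (R₁ • dir θ₁) + min ε₁ ε₂ * R₂ ≤ mu (R₂ • z) + mu (R₁ • dir θ₁ - R₂ • z) := by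
    intro z ε hbz hminε
    rcases hR₂.eq_or_lt with h0 | h0
    · rw [← h0, zero_smul, sub_zero, mu_zero' mu h_smul]
      simp
    · have hs := hbz (R₁ / R₂) (div_nonneg hR₁ h0.le)
      have hmul := mul_le_mul_of_nonneg_left hs h0.le
      have ec : R₂ * (R₁ / R₂) = R₁ := by field_simp
      have e1 : R₂ • ((R₁ / R₂) • dir θ₁ - z) = R₁ • dir θ₁ - R₂ • z := by
        rw [smul_sub, smul_smul, ec]
      have e2 : mu (R₂ • ((R₁ / R₂) • dir θ₁ - z)) = R₂ * mu ((R₁ / R₂) • dir θ₁ - z) :=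
        mu_smul' mu h_smul R₂ h0.le _
      rw [e1] at e2
      have e3 : mu (R₁ • dir θ₁) = R₁ * mu (dir θ₁) := mu_smul' mu h_smul R₁ hR₁ _
      have e4 : mu (R₂ • z) = R₂ * mu z := mu_smul' mu h_smul R₂ h0.le _
      have e5 : R₂ * (R₁ / R₂ * mu (dir θ₁) - mu z + ε)
          = R₁ * mu (dir θ₁) - R₂ * mu z + R₂ * ε := by
        field_simp
      have hεR : min ε₁ ε₂ * R₂ ≤ ε * R₂ := mul_le_mul_of_nonneg_right hminε h0.le
      rw [e3, e4]
      linarith [hmul, e2, e5, hεR]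
  exact ⟨main (dir θ₂) ε₁ hb₁ (min_le_left _ _), main (dir (-θ₂)) ε₂ hb₂ (min_le_right _ _)⟩
end
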